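/- Let p be a prime, let A ⊆ C be a ring extension of characteristic p of finite exponent such that C admits a p-basis x_1,…,x_n over C^{[1]}, and let M be a C-module. For every A-linear map ∂ : C^{[1]} → M, define D : C → M by D(Σ_α λ_α x^α) = Σ_α x^α·∂(λ_α), where the sum ranges over the reduced monomials x^α = x_1^{α_1}⋯x_n^{α_n} with 0 ≤ α_i < p and λ_α ∈ C^{[1]}. Then the assignment ∂ ↦ D is a morphism of left C-modules ext : Hom_A(C^{[1]},M) → Hom_A(C,M) such that the composition of ext with restriction to C^{[1]} is the identity, and for every k ≥ 0, ext maps Diff_A^k(C^{[1]},M) into Diff_A^{pk}(C,M); in particular every A-differential operator C^{[1]} → M of order ≤ k extends to an A-differential operator C → M of order ≤ pk. -/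

import Mathlib

set_option maxHeartbeats 1600000
set_option synthInstance.maxHeartbeats 400000


open scoped TensorProduct

universe u

namespace PIPaper

/-! ### Exponent, `C^{[e]}`, F-extensions -/

section Exponent

variable (p : ℕ) (R S : Type u) [CommRing R] [CommRing S] [Algebra R S]

/-- Every element of `S` has `p^e`-th power in (the image of) `R`. -/
def HasExpLE (e : ℕ) : Prop :=
  ∀ x : S, x ^ p ^ e ∈ (algebraMap R S).range

/-- The extension `R ⊆ S` has finite exponent. -/
def HasFinExp : Prop := ∃ e, HasExpLE p R S e

/-- `exp(S/R)`, the least exponent of the extension. -/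
noncomputable def ringExp : ℕ := sInf {e | HasExpLE p R S e}

/-- `S^{[e]} = R[S^{p^e}]`, the `R`-subalgebra of `S` generated by all `p^e`-th powers. -/
def subalgPow (e : ℕ) : Subalgebra R S :=
  Algebra.adjoin R (Set.range fun x : S => x ^ p ^ e)

/-- `R ⊆ S` is an `𝓕`-extension: finite, of finite exponent, and `S` is projective
over `S^{[e]} = R[S^{p^e}]` for every `e`. -/
def IsFExt : Prop :=
  Module.Finite R S ∧ HasFinExp p R S ∧
    ∀ e : ℕ, Module.Projective (subalgPow p R S e) S

lemma subalgPow_succ_le (e : ℕ) : subalgPow p R S (e + 1) ≤ subalgPow p R S e := by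
  apply Algebra.adjoin_le
  rintro _ ⟨x, rfl⟩
  have hx : x ^ p ^ (e + 1) = (x ^ p) ^ p ^ e := by
    rw [← pow_mul, ← pow_succ']
  show x ^ p ^ (e + 1) ∈ subalgPow p R S e
  rw [hx]
  exact Algebra.subset_adjoin ⟨x ^ p, rfl⟩

end Exponent

/-! ### Purely inseparable extensions -/

section PI

variable (p : ℕ) (R S : Type u) [CommRing R] [CommRing S] [Algebra R S]

/-- The model algebra `A'[X_1,…,X_n]/⟨X_1^{p^{e_1}},…,X_n^{p^{e_n}}⟩`. -/
abbrev truncModel (n : ℕ) (ee : Fin n → ℕ) (A' : Type u) [CommRing A'] : Type u :=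
  MvPolynomial (Fin n) A' ⧸
    Ideal.span (Set.range fun i : Fin n =>
      (MvPolynomial.X i : MvPolynomial (Fin n) A') ^ p ^ ee i)

/-- A witness that, after a faithfully flat base change `A_𝔭 → A'`, the extension
`C_𝔭 ⊗_{A_𝔭} A' = A' ⊗_A C` becomes a truncated polynomial algebra
`A'[X_1,…,X_n]/⟨X_i^{p^{e_i}}⟩` with all `e_i > 0`. -/
structure PISplitting (𝔭 : Ideal R) [𝔭.IsPrime] : Type (u + 1) where
  A' : Type u
  [commRingA' : CommRing A']
  [algLoc : Algebra (Localization.AtPrime 𝔭) A']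
  [algR : Algebra R A']
  tower : IsScalarTower R (Localization.AtPrime 𝔭) A'
  faithfullyFlat : Module.FaithfullyFlat (Localization.AtPrime 𝔭) A'
  n : ℕ
  ee : Fin n → ℕ
  ee_pos : ∀ i, 0 < ee i
  equiv : (A' ⊗[R] S) ≃ₐ[A'] truncModel p n ee A'

/-- `R ⊆ S` is a purely inseparable (ring) extension. -/
def IsPurelyInsep : Prop :=
  HasFinExp p R S ∧ Module.Finite R S ∧ Module.Projective R S ∧
    ∀ (𝔭 : Ideal R) [𝔭.IsPrime], Nonempty (PISplitting p R S 𝔭)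

/-- `R ⊆ S` is a purely inseparable extension of exponent one, i.e. the faithfully
flat base changes can be taken of the form `A'[X_1,…,X_n]/⟨X_1^p,…,X_n^p⟩`. -/
def IsPurelyInsep1 : Prop :=
  HasExpLE p R S 1 ∧ Module.Finite R S ∧ Module.Projective R S ∧
    ∀ (𝔭 : Ideal R) [𝔭.IsPrime], ∃ sp : PISplitting p R S 𝔭, ∀ i, sp.ee i = 1

/-- `x_1,…,x_n` is a `p`-basis of `S` over `R`: the reduced monomials
`x_1^{α_1} ⋯ x_n^{α_n}` with `0 ≤ α_i < p` form a basis of `S` as an `R`-module. -/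
def IsPBasis {n : ℕ} (x : Fin n → S) : Prop :=
  LinearIndependent R (fun α : Fin n → Fin p => ∏ i, x i ^ (α i : ℕ)) ∧
    Submodule.span R (Set.range fun α : Fin n → Fin p => ∏ i, x i ^ (α i : ℕ)) = ⊤

/-- `R ⊆ S` is a Galois extension of exponent one: finite, of exponent one, `S`
projective over `R`, and each localization at a prime of `R` admits a `p`-basis. -/
def IsGalois1 : Prop :=
  Module.Finite R S ∧ HasExpLE p R S 1 ∧ Module.Projective R S ∧
    ∀ (𝔭 : Ideal R) [𝔭.IsPrime],
      ∃ (n : ℕ) (x : Fin n → Localization.AtPrime 𝔭 ⊗[R] S),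
        IsPBasis p (Localization.AtPrime 𝔭) (Localization.AtPrime 𝔭 ⊗[R] S) x

/-- The extension `T₁ ⊆ T₂` of subalgebras of `S` is Galois of exponent one. -/
def IsGalois1Between (T₁ T₂ : Subalgebra R S) (h : T₁ ≤ T₂) : Prop :=
  letI : Algebra T₁ T₂ := (Subalgebra.inclusion h).toRingHom.toAlgebra
  IsGalois1 p T₁ T₂

end PI

/-! ### Principal parts and differential operators -/

/-- The module of principal parts `P^k_{S/R} = (S ⊗[R] S) / J^{k+1}`, a left `S`-module. -/
abbrev prinParts (R S : Type u) [CommRing R] [CommRing S] [Algebra R S] (k : ℕ) : Type u :=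
  (S ⊗[R] S) ⧸ (KaehlerDifferential.ideal R S ^ (k + 1))

section Diff

variable (R S M : Type u) [CommRing R] [CommRing S] [Algebra R S]
  [AddCommGroup M] [Module R M] [Module S M] [IsScalarTower R S M]

/-- `[x, D] : c ↦ x • D c - D (x * c)`. -/
def opBracket (x : S) (D : S →ₗ[R] M) : S →ₗ[R] M :=
  x • D - D ∘ₗ LinearMap.mulLeft R x

/-- `D : S → M` is an `R`-differential operator of order at most `n`:
all `(n+1)`-fold iterated brackets `[x_0,[x_1,…,[x_n, D]…]]` vanish. -/
def IsDiffOpLE (n : ℕ) (D : S →ₗ[R] M) : Prop :=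
  ∀ xs : List S, xs.length = n + 1 → xs.foldr (opBracket R S M) D = 0

end Diff

/-- `Diff_R^n(S)` is a direct summand of `End_R(S)` as a left `S`-module:
there is an `S`-linear projection of `End_R(S)` onto the submodule of
differential operators of order at most `n`. -/
def DiffSummand (R S : Type u) [CommRing R] [CommRing S] [Algebra R S] (n : ℕ) : Prop :=
  ∃ π : (S →ₗ[R] S) →ₗ[S] (S →ₗ[R] S),
    (∀ D, IsDiffOpLE R S S n (π D)) ∧ ∀ D, IsDiffOpLE R S S n D → π D = D

/-- `D` is an `R`-derivation of `S` (as an `R`-linear endomorphism). -/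
def IsLinearDerivation (R S : Type u) [CommRing R] [CommRing S] [Algebra R S]
    (D : S →ₗ[R] S) : Prop :=
  ∀ x y : S, D (x * y) = x * D y + y * D x

/-- `Der_R(S)` is a direct summand of `End_R(S)` as a left `S`-module. -/
def DerSummand (R S : Type u) [CommRing R] [CommRing S] [Algebra R S] : Prop :=
  ∃ π : (S →ₗ[R] S) →ₗ[S] (S →ₗ[R] S),
    (∀ D, IsLinearDerivation R S (π D)) ∧ ∀ D, IsLinearDerivation R S D → π D = D

/-! ### Jacobson–Bourbaki -/

section JB

variable (A C : Type u) [CommRing A] [CommRing C] [Algebra A C]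

/-- `End_B(C)` as an `A`-subalgebra of `End_A(C)`, for an intermediate ring
`A ⊆ B ⊆ C`. -/
def endOver (B : Subalgebra A C) : Subalgebra A (Module.End A C) where
  carrier := {φ : Module.End A C | ∀ b ∈ B, ∀ x : C, φ (b * x) = b * φ x}
  mul_mem' := by
    intro φ ψ hφ hψ b hb x
    show φ (ψ (b * x)) = b * φ (ψ x)
    rw [hψ b hb x]
    exact hφ b hb (ψ x)
  one_mem' := by intro b hb x; rfl
  add_mem' := by
    intro φ ψ hφ hψ b hb x
    show φ (b * x) + ψ (b * x) = b * (φ x + ψ x)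
    rw [hφ b hb x, hψ b hb x, mul_add]
  zero_mem' := by intro b hb x; simp
  algebraMap_mem' := by
    intro a b hb x
    show algebraMap A (Module.End A C) a (b * x) = b * (algebraMap A (Module.End A C) a x)
    rw [Module.algebraMap_end_apply, Module.algebraMap_end_apply, mul_smul_comm]

/-- `B_H := {x ∈ C : φ (x * c) = x * φ c for all φ ∈ H, c ∈ C}`. -/
def fixedSubalg (H : Subalgebra A (Module.End A C)) : Subalgebra A C where
  carrier := {c : C | ∀ φ ∈ H, ∀ x : C, φ (c * x) = c * φ x}
  mul_mem' := by
    intro a b ha hb φ hφ x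
    show φ (a * b * x) = a * b * φ x
    rw [mul_assoc, ha φ hφ (b * x), hb φ hφ x, mul_assoc]
  one_mem' := by intro φ hφ x; simp
  add_mem' := by
    intro a b ha hb φ hφ x
    show φ ((a + b) * x) = (a + b) * φ x
    rw [add_mul, map_add, ha φ hφ x, hb φ hφ x, add_mul]
  zero_mem' := by intro φ hφ x; simp
  algebraMap_mem' := by
    intro a φ hφ x
    show φ (algebraMap A C a * x) = algebraMap A C a * φ x
    rw [← Algebra.smul_def, map_smul, Algebra.smul_def]

/-- `H` is a `C`-submodule of `End_A(C)` which is a direct summand as a left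
`C`-module: `H` is stable under the `C`-action and there is a `C`-linear
projection of `End_A(C)` onto `H`. -/
def IsCSummand (H : Subalgebra A (Module.End A C)) : Prop :=
  (∀ (c : C) (φ : Module.End A C), φ ∈ H → c • φ ∈ H) ∧
  ∃ π : Module.End A C →ₗ[C] Module.End A C,
    (∀ D, π D ∈ H) ∧ ∀ D ∈ H, π D = D

end JB

/-! ### Kernel of a family of derivations -/

/-- The common kernel `∩ ker ∂_i` of a family of derivations, as a subring
(`ℤ`-subalgebra) of `C`. -/
def kerDer (C : Type u) [CommRing C] {n : ℕ} (d : Fin n → Derivation ℤ C C) :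
    Subalgebra ℤ C where
  carrier := {c : C | ∀ i, d i c = 0}
  mul_mem' := by
    intro a b ha hb i
    rw [Derivation.leibniz, ha i, hb i, smul_zero, smul_zero, add_zero]
  one_mem' := by intro i; simp
  add_mem' := by intro a b ha hb i; rw [map_add, ha i, hb i, add_zero]
  algebraMap_mem' := by intro m i; simp

/-- Truncated-polynomial generator `x_i`, the class of `X_i`. -/
noncomputable def truncX (p : ℕ) (n : ℕ) (ee : Fin n → ℕ) (A' : Type u) [CommRing A'] (i : Fin n) :
    truncModel p n ee A' :=
  Ideal.Quotient.mk _ (MvPolynomial.X i)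

/-- The monomial `x^β = x_1^{β_1} ⋯ x_n^{β_n}` in the truncated polynomial algebra. -/
noncomputable def truncMon (p : ℕ) (n : ℕ) (ee : Fin n → ℕ) (A' : Type u) [CommRing A']
    (β : Fin n → ℕ) : truncModel p n ee A' :=
  ∏ j, truncX p n ee A' j ^ β j


section BracketLemmas
variable {R S M : Type u} [CommRing R] [CommRing S] [Algebra R S]
  [AddCommGroup M] [Module R M] [Module S M] [IsScalarTower R S M]

lemma opBracket_apply (x : S) (D : S →ₗ[R] M) (u : S) :
    opBracket R S M x D u = x • D u - D (x * u) := rfl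

lemma opBracket_add (x : S) (D E : S →ₗ[R] M) :
    opBracket R S M x (D + E) = opBracket R S M x D + opBracket R S M x E := by
  ext u; simp [opBracket_apply]; abel

lemma opBracket_zero (x : S) : opBracket R S M x 0 = 0 := by
  ext u; simp [opBracket_apply]

lemma opBracket_smul (x c : S) (D : S →ₗ[R] M) :
    opBracket R S M x (c • D) = c • opBracket R S M x D := by
  ext u
  simp only [opBracket_apply, LinearMap.smul_apply, smul_sub]
  rw [smul_comm]

lemma opBracket_comp_mulLeft (x c : S) (D : S →ₗ[R] M) :
    opBracket R S M x (D ∘ₗ LinearMap.mulLeft R c) =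
      (opBracket R S M x D) ∘ₗ LinearMap.mulLeft R c := by
  ext u
  simp only [opBracket_apply, LinearMap.comp_apply, LinearMap.mulLeft_apply]
  rw [mul_left_comm]

lemma opBracket_comm (x y : S) (D : S →ₗ[R] M) :
    opBracket R S M x (opBracket R S M y D) = opBracket R S M y (opBracket R S M x D) := by
  ext u
  simp only [opBracket_apply, LinearMap.comp_apply, LinearMap.mulLeft_apply, smul_sub]
  rw [smul_comm x y, mul_left_comm x y]
  abel

lemma opBracket_algebraMap (a : R) (D : S →ₗ[R] M) :
    opBracket R S M (algebraMap R S a) D = 0 := by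
  ext u
  simp only [opBracket_apply, LinearMap.zero_apply, ← Algebra.smul_def, map_smul,
    algebraMap_smul, sub_self]

lemma opBracket_mul (x y : S) (D : S →ₗ[R] M) :
    opBracket R S M (x * y) D =
      x • opBracket R S M y D + (opBracket R S M x D) ∘ₗ LinearMap.mulLeft R y := by
  ext u
  simp only [opBracket_apply, LinearMap.add_apply, LinearMap.smul_apply, LinearMap.comp_apply,
    LinearMap.mulLeft_apply, smul_sub, mul_smul, mul_assoc]
  abel

lemma foldr_opBracket_add (gs : List S) (D E : S →ₗ[R] M) :
    gs.foldr (opBracket R S M) (D + E) =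
      gs.foldr (opBracket R S M) D + gs.foldr (opBracket R S M) E := by
  induction gs with
  | nil => rfl
  | cons g gs ih => simp [List.foldr_cons, ih, opBracket_add]

lemma foldr_opBracket_zero (gs : List S) :
    gs.foldr (opBracket R S M) (0 : S →ₗ[R] M) = 0 := by
  induction gs with
  | nil => rfl
  | cons g gs ih => simp [List.foldr_cons, ih, opBracket_zero]

lemma foldr_opBracket_smul (gs : List S) (c : S) (D : S →ₗ[R] M) :
    gs.foldr (opBracket R S M) (c • D) = c • gs.foldr (opBracket R S M) D := by
  induction gs with
  | nil => rfl
  | cons g gs ih => simp [List.foldr_cons, ih, opBracket_smul]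

lemma foldr_opBracket_comp (gs : List S) (c : S) (D : S →ₗ[R] M) :
    gs.foldr (opBracket R S M) (D ∘ₗ LinearMap.mulLeft R c) =
      (gs.foldr (opBracket R S M) D) ∘ₗ LinearMap.mulLeft R c := by
  induction gs with
  | nil => rfl
  | cons g gs ih => simp [List.foldr_cons, ih, opBracket_comp_mulLeft]

lemma foldr_opBracket_swap (gs : List S) (y : S) (D : S →ₗ[R] M) :
    gs.foldr (opBracket R S M) (opBracket R S M y D) =
      opBracket R S M y (gs.foldr (opBracket R S M) D) := by
  induction gs with
  | nil => rfl
  | cons g gs ih => simp [List.foldr_cons, ih, opBracket_comm]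

end BracketLemmas

section Reduce
variable {A C M : Type u} [CommRing A] [CommRing C] [Algebra A C]
  [AddCommGroup M] [Module A M] [Module C M] [IsScalarTower A C M]

/-- all generator-lists of length `N` bracket `D` to zero. -/
def GenVanish (GS : Set C) (N : ℕ) (D : C →ₗ[A] M) : Prop :=
  ∀ gs : List C, (∀ g ∈ gs, g ∈ GS) → gs.length = N → gs.foldr (opBracket A C M) D = 0

namespace GenVanish
variable {GS : Set C}

lemma zero (N : ℕ) : GenVanish GS N (0 : C →ₗ[A] M) :=
  fun gs _ _ => foldr_opBracket_zero gs

lemma add {N : ℕ} {D E : C →ₗ[A] M} (hD : GenVanish GS N D) (hE : GenVanish GS N E) :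
    GenVanish GS N (D + E) := fun gs h1 h2 => by
  rw [foldr_opBracket_add, hD gs h1 h2, hE gs h1 h2, add_zero]

lemma smul {N : ℕ} {D : C →ₗ[A] M} (c : C) (hD : GenVanish GS N D) :
    GenVanish GS N (c • D) := fun gs h1 h2 => by
  rw [foldr_opBracket_smul, hD gs h1 h2, smul_zero]

lemma comp_mulLeft {N : ℕ} {D : C →ₗ[A] M} (c : C) (hD : GenVanish GS N D) :
    GenVanish GS N (D ∘ₗ LinearMap.mulLeft A c) := fun gs h1 h2 => by
  rw [foldr_opBracket_comp, hD gs h1 h2, LinearMap.zero_comp]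

lemma bracket_gen {N : ℕ} {D : C →ₗ[A] M} (hD : GenVanish GS (N + 1) D) {g : C}
    (hg : g ∈ GS) : GenVanish GS N (opBracket A C M g D) := fun gs h1 h2 => by
  rw [show gs.foldr (opBracket A C M) (opBracket A C M g D)
      = (gs ++ [g]).foldr (opBracket A C M) D by rw [List.foldr_append]; rfl]
  exact hD (gs ++ [g]) (by
    intro y hy
    rcases List.mem_append.mp hy with h | h
    · exact h1 y h
    · rw [List.mem_singleton.mp h]; exact hg) (by simp [h2])

lemma bracket_aux (hGS : Algebra.adjoin A GS = ⊤) :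
    ∀ c : C, ∀ N : ℕ, ∀ D : C →ₗ[A] M,
      GenVanish GS (N + 1) D → GenVanish GS N (opBracket A C M c D) := by
  intro c
  have hc : c ∈ Algebra.adjoin A GS := hGS ▸ Algebra.mem_top
  induction hc using Algebra.adjoin_induction with
  | mem g hg => exact fun N D hD => bracket_gen hD hg
  | algebraMap a => exact fun N D hD => by rw [opBracket_algebraMap]; exact zero N
  | add u v hu hv ihu ihv =>
      intro N D hD
      have : opBracket A C M (u + v) D = opBracket A C M u D + opBracket A C M v D := by
        ext w
        simp [opBracket, add_mul, add_smul, map_add]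
        abel
      rw [this]; exact (ihu N D hD).add (ihv N D hD)
  | mul u v hu hv ihu ihv =>
      intro N D hD
      rw [opBracket_mul]
      exact ((ihv N D hD).smul u).add ((ihu N D hD).comp_mulLeft v)

lemma isDiffOpLE (hGS : Algebra.adjoin A GS = ⊤) {D : C →ₗ[A] M} {N : ℕ}
    (hD : GenVanish GS (N + 1) D) : IsDiffOpLE A C M N D := by
  have key : ∀ (cs : List C) (N : ℕ) (D : C →ₗ[A] M), GenVanish GS (cs.length + N) D →
      GenVanish GS N (cs.foldr (opBracket A C M) D) := by
    intro cs
    induction cs with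
    | nil => exact fun N D h => by simpa using h
    | cons c cs ih =>
        intro N D h
        rw [List.foldr_cons]
        exact bracket_aux hGS c N _ (ih (N + 1) D
          (by rwa [show cs.length + (N + 1) = (c :: cs).length + N by
            simp only [List.length_cons]; omega]))
  intro cs hlen
  have := key cs 0 D (by rwa [hlen, Nat.add_zero])
  simpa using this [] (by simp) rfl
end GenVanish
end Reduce

section Core
variable {p n : ℕ} [NeZero p] {A C M : Type u} [CommRing A] [CommRing C] [Algebra A C]
  [AddCommGroup M] [Module A M] [Module C M] [IsScalarTower A C M]
  {B : Subalgebra A C}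

lemma Bsmul_M (b : B) (m : M) : b • m = (b : C) • m := rfl
lemma Bsmul_C (b : B) (u : C) : b • u = (b : C) * u := rfl

/-- shift up coordinate `i` (mod p). -/
def msucc (i : Fin n) (β : Fin n → Fin p) : Fin n → Fin p :=
  Function.update β i (β i + 1)

/-- shift down coordinate `i` (mod p). -/
def mpred (i : Fin n) (γ : Fin n → Fin p) : Fin n → Fin p :=
  Function.update γ i (γ i - 1)

lemma msucc_apply_self (i : Fin n) (β : Fin n → Fin p) : msucc i β i = β i + 1 := by
  simp [msucc]

lemma msucc_apply_ne {i j : Fin n} (h : j ≠ i) (β : Fin n → Fin p) : msucc i β j = β j := by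
  simp [msucc, Function.update_of_ne h]

lemma mpred_msucc (i : Fin n) (β : Fin n → Fin p) : mpred i (msucc i β) = β := by
  funext j
  rcases eq_or_ne j i with rfl | h
  · simp [mpred, msucc]
  · simp [mpred, msucc, Function.update_of_ne h]

lemma msucc_mpred (i : Fin n) (γ : Fin n → Fin p) : msucc i (mpred i γ) = γ := by
  funext j
  rcases eq_or_ne j i with rfl | h
  · simp [mpred, msucc]
  · simp [mpred, msucc, Function.update_of_ne h]

lemma msucc_bijective (i : Fin n) : Function.Bijective (msucc (p := p) i) :=
  Function.bijective_iff_has_inverse.mpr ⟨mpred i, mpred_msucc i, msucc_mpred i⟩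

lemma msucc_comm {i j : Fin n} (h : i ≠ j) (β : Fin n → Fin p) :
    msucc i (msucc j β) = msucc j (msucc i β) := by
  unfold msucc
  rw [Function.update_of_ne h, Function.update_of_ne h.symm, Function.update_comm h.symm]

variable (x : Fin n → C)

/-- the reduced monomial `x^α`. -/
def mon (α : Fin n → Fin p) : C := ∏ i, x i ^ ((α i : ℕ))

/-- the wrap-around coefficient. -/
def wv (i : Fin n) (v : Fin p) : C := if (v : ℕ) = p - 1 then x i ^ p else 1

/-- first coefficient transform. -/
def T1 (i : Fin n) (c : (Fin n → Fin p) → C) : (Fin n → Fin p) → C :=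
  fun β => x i * c β - wv x i (β i) * c (msucc i β)

/-- second coefficient transform. -/
def T2 (i : Fin n) (c : (Fin n → Fin p) → C) : (Fin n → Fin p) → C :=
  fun β => if ((β i : ℕ) = p - 1) then c (msucc i β) else 0

lemma T1_zero (i : Fin n) : T1 x i (0 : (Fin n → Fin p) → C) = 0 := by
  funext β; simp [T1]

lemma T2_zero (i : Fin n) : T2 (p := p) (C := C) i 0 = 0 := by
  funext β; simp [T2]

lemma hval_succ (hp : p.Prime) (v : Fin p) :
    ((v + 1 : Fin p) : ℕ) = if (v : ℕ) = p - 1 then 0 else (v : ℕ) + 1 := by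
  have h2 : 1 < p := hp.one_lt
  have hv := v.isLt
  rw [Fin.add_def]
  simp only [Fin.val_one', Nat.mod_eq_of_lt h2]
  split_ifs with h
  · rw [h, Nat.sub_add_cancel h2.le, Nat.mod_self]
  · rw [Nat.mod_eq_of_lt (by omega)]

lemma xmul_mon (hp : p.Prime) (i : Fin n) (β : Fin n → Fin p) :
    x i * mon x β = wv x i (β i) * mon x (msucc i β) := by
  unfold mon
  rw [← Finset.mul_prod_erase Finset.univ _ (Finset.mem_univ i),
      ← Finset.mul_prod_erase Finset.univ _ (Finset.mem_univ i)]
  have hrest : ∏ j ∈ Finset.univ.erase i, x j ^ ((msucc i β j : ℕ)) =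
      ∏ j ∈ Finset.univ.erase i, x j ^ ((β j : ℕ)) := by
    apply Finset.prod_congr rfl
    intro j hj
    rw [msucc_apply_ne (Finset.ne_of_mem_erase hj)]
  rw [hrest, msucc_apply_self, hval_succ hp, ← mul_assoc, ← mul_assoc]
  congr 1
  unfold wv
  split_ifs with h
  · rw [h, pow_zero, mul_one, ← pow_succ']
    congr 1
    have := hp.one_lt
    omega
  · rw [one_mul, ← pow_succ']


section WithBasis
variable (hxp : ∀ i, x i ^ p ∈ B) (bas : Module.Basis (Fin n → Fin p) B C)

/-- wrap coefficient as an element of `B`. -/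
def wB (i : Fin n) (v : Fin p) : B :=
  if (v : ℕ) = p - 1 then ⟨x i ^ p, hxp i⟩ else 1

lemma wB_coe (i : Fin n) (v : Fin p) : ((wB x hxp i v : B) : C) = wv x i v := by
  unfold wB wv
  split_ifs <;> rfl

lemma xmul_bas (hp : p.Prime) (hbas : ∀ α, bas α = mon x α) (i : Fin n) (β : Fin n → Fin p) :
    x i * bas β = wB x hxp i (β i) • bas (msucc i β) := by
  rw [hbas, hbas, Bsmul_C, wB_coe, xmul_mon x hp]


lemma repr_xmul (hp : p.Prime) (hbas : ∀ α, bas α = mon x α) (i : Fin n) (u : C) (γ : Fin n → Fin p) :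
    bas.repr (x i * u) γ =
      wB x hxp i ((mpred i γ) i) * bas.repr u (mpred i γ) := by
  have : (bas.coord γ) ∘ₗ (LinearMap.mulLeft B (x i)) =
      wB x hxp i ((mpred i γ) i) • (bas.coord (mpred i γ)) := by
    apply bas.ext
    intro β
    simp only [LinearMap.comp_apply, LinearMap.mulLeft_apply, LinearMap.smul_apply]
    rw [xmul_bas x hxp bas hp hbas, map_smul, Module.Basis.coord_apply, Module.Basis.coord_apply]
    rcases eq_or_ne (msucc i β) γ with h | h
    · rw [← h, mpred_msucc]
      simp [Module.Basis.repr_self]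
    · have h2 : β ≠ mpred i γ := fun hb => h (by rw [hb, msucc_mpred])
      simp [Module.Basis.repr_self, Finsupp.single_apply, h, h2]
  have := congrArg (fun (L : C →ₗ[B] B) => L u) this
  simpa using this

/-- The extension-type operator attached to a coefficient family `c` and `e`. -/
noncomputable def Tm (c : (Fin n → Fin p) → C) (e : B →ₗ[A] M) : C →ₗ[A] M :=
  ∑ α, c α • (e ∘ₗ ((bas.coord α).restrictScalars A))

lemma Tm_apply (c : (Fin n → Fin p) → C) (e : B →ₗ[A] M) (u : C) :
    Tm bas c e u = ∑ α, c α • e (bas.repr u α) := by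
  unfold Tm
  rw [LinearMap.sum_apply]
  apply Finset.sum_congr rfl
  intro α _
  rfl

lemma Tm_zero_c (e : B →ₗ[A] M) : Tm bas 0 e = 0 := by
  ext u; simp [Tm_apply]

lemma Tm_zero_e (c : (Fin n → Fin p) → C) : Tm bas c (0 : B →ₗ[A] M) = 0 := by
  ext u; simp [Tm_apply]

lemma Tm_add_c (c c' : (Fin n → Fin p) → C) (e : B →ₗ[A] M) :
    Tm bas (c + c') e = Tm bas c e + Tm bas c' e := by
  ext u; simp [Tm_apply, add_smul, Finset.sum_add_distrib]

lemma Tm_add_e (c : (Fin n → Fin p) → C) (e e' : B →ₗ[A] M) :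
    Tm bas c (e + e') = Tm bas c e + Tm bas c e' := by
  ext u; simp [Tm_apply, smul_add, Finset.sum_add_distrib]

lemma Tm_smul_e (c : (Fin n → Fin p) → C) (y : C) (e : B →ₗ[A] M) :
    Tm bas c (y • e) = y • Tm bas c e := by
  ext u
  simp only [Tm_apply, LinearMap.smul_apply, Finset.smul_sum]
  apply Finset.sum_congr rfl
  intro α _
  rw [smul_comm]

lemma adB (b : B) (c : (Fin n → Fin p) → C) (e : B →ₗ[A] M) :
    opBracket A C M (b : C) (Tm bas c e) = Tm bas c (opBracket A B M b e) := by
  ext u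
  simp only [opBracket_apply, Tm_apply]
  have hrep : ∀ α, bas.repr ((b : C) * u) α = b * bas.repr u α := by
    intro α
    rw [show (b : C) * u = b • u from rfl, map_smul]
    rfl
  rw [Finset.smul_sum, ← Finset.sum_sub_distrib]
  apply Finset.sum_congr rfl
  intro α _
  rw [hrep α]
  simp only [smul_sub]
  rw [Bsmul_M, smul_comm (b : C) (c α)]

lemma adX (hp : p.Prime) (hbas : ∀ α, bas α = mon x α) (i : Fin n) (c : (Fin n → Fin p) → C) (e : B →ₗ[A] M) :
    opBracket A C M (x i) (Tm bas c e) =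
      Tm bas (T1 x i c) e + Tm bas (T2 i c) (opBracket A B M ⟨x i ^ p, hxp i⟩ e) := by
  ext u
  simp only [opBracket_apply, Tm_apply, LinearMap.add_apply]
  have h2 : ∑ α, c α • e (bas.repr (x i * u) α) =
      ∑ β, c (msucc i β) • e (wB x hxp i (β i) * bas.repr u β) := by
    rw [← Function.Bijective.sum_comp (msucc_bijective i)
      (fun γ => c γ • e (bas.repr (x i * u) γ))]
    apply Finset.sum_congr rfl
    intro β _
    rw [repr_xmul x hxp bas hp hbas, mpred_msucc]
  rw [h2, Finset.smul_sum, ← Finset.sum_sub_distrib, ← Finset.sum_add_distrib]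
  apply Finset.sum_congr rfl
  intro β _
  simp only [T1, T2]
  by_cases h : ((β i : ℕ) = p - 1)
  · rw [if_pos h]
    have hw : wB x hxp i (β i) = ⟨x i ^ p, hxp i⟩ := by unfold wB; rw [if_pos h]
    have hwv : wv x i (β i) = x i ^ p := by unfold wv; rw [if_pos h]
    rw [hw, hwv, smul_sub, sub_smul, Bsmul_M]
    simp only [smul_smul]
    rw [mul_comm (c (msucc i β)) (x i ^ p)]
    abel
  · rw [if_neg h]
    have hw : wB x hxp i (β i) = 1 := by unfold wB; rw [if_neg h]
    have hwv : wv x i (β i) = 1 := by unfold wv; rw [if_neg h]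
    rw [hw, hwv, one_mul, one_mul, zero_smul, add_zero, sub_smul, smul_smul]


end WithBasis

section Transforms
variable (hp : p.Prime)

lemma T1_comm {i j : Fin n} (h : i ≠ j) (c : (Fin n → Fin p) → C) :
    T1 x i (T1 x j c) = T1 x j (T1 x i c) := by
  funext β
  simp only [T1, msucc_apply_ne h, msucc_apply_ne h.symm]
  rw [msucc_comm h]
  ring

lemma T1_T2_comm {i j : Fin n} (h : i ≠ j) (c : (Fin n → Fin p) → C) :
    T1 x i (T2 j c) = T2 j (T1 x i c) := by
  funext β
  simp only [T1, T2, msucc_apply_ne h.symm]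
  by_cases hb : ((β j : ℕ) = p - 1)
  · rw [if_pos hb, if_pos hb, if_pos hb, msucc_apply_ne h, msucc_comm h]
  · rw [if_neg hb, if_neg hb, if_neg hb, mul_zero, mul_zero, sub_zero]

lemma comm_iterate {F G : ((Fin n → Fin p) → C) → ((Fin n → Fin p) → C)}
    (h : ∀ c, F (G c) = G (F c)) (t : ℕ) (c : (Fin n → Fin p) → C) :
    F^[t] (G c) = G (F^[t] c) := by
  induction t generalizing c with
  | zero => rfl
  | succ t ih => rw [Function.iterate_succ_apply, Function.iterate_succ_apply, h, ih]

/-- the twisted-shift endomorphism. -/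
def SE (i : Fin n) : Module.End C ((Fin n → Fin p) → C) where
  toFun c := fun β => wv x i (β i) * c (msucc i β)
  map_add' c c' := by funext β; simp [mul_add]
  map_smul' a c := by
    funext β
    simp only [Pi.smul_apply, smul_eq_mul, RingHom.id_apply]
    ring

lemma T1_eq_end (i : Fin n) (c : (Fin n → Fin p) → C) :
    T1 x i c = (algebraMap C (Module.End C ((Fin n → Fin p) → C)) (x i)) c - (SE x i) c := by
  funext β
  simp [T1, SE, Module.algebraMap_end_apply]

open Fin.NatCast in
lemma SE_pow_apply (i : Fin n) (t : ℕ) (c : (Fin n → Fin p) → C) (β : Fin n → Fin p) :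
    ((SE x i) ^ t) c β =
      (∏ l ∈ Finset.range t, wv x i (β i + (l : Fin p))) *
        c (Function.update β i (β i + (t : Fin p))) := by
  induction t generalizing c β with
  | zero =>
      simp only [pow_zero, Module.End.one_apply, Finset.range_zero, Finset.prod_empty, one_mul,
        Nat.cast_zero, add_zero]
      rw [Function.update_eq_self]
  | succ t ih =>
      rw [pow_succ, Module.End.mul_apply, ih]
      have hse : (SE x i) c = fun γ => wv x i (γ i) * c (msucc i γ) := rfl
      rw [hse]
      simp only [Function.update_self]
      rw [Finset.prod_range_succ, mul_assoc]
      congr 2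
      unfold msucc
      rw [Function.update_idem, Function.update_self]
      congr 2
      push_cast
      rw [add_assoc]

open Fin.NatCast in
lemma prod_wv (hp : p.Prime) (i : Fin n) (v : Fin p) :
    ∏ l ∈ Finset.range p, wv x i (v + (l : Fin p)) = x i ^ p := by
  have h1 : ∏ l ∈ Finset.range p, wv x i (v + (l : Fin p)) =
      ∏ w : Fin p, wv x i (v + w) := by
    rw [← Fin.prod_univ_eq_prod_range (fun l : ℕ => wv x i (v + (l : Fin p))) p]
    apply Finset.prod_congr rfl
    intro w _
    rw [Fin.cast_val_eq_self]
  rw [h1]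
  have h2 : ∏ w : Fin p, wv x i (v + w) = ∏ w : Fin p, wv x i w := by
    rw [← Equiv.prod_comp (Equiv.addLeft v) (wv x i)]
    apply Finset.prod_congr rfl
    intro w _
    rw [Equiv.coe_addLeft]
  rw [h2]
  have hppos := hp.pos
  have hlast : ∀ w : Fin p, ((w : ℕ) = p - 1) ↔ w = ⟨p - 1, by omega⟩ := by
    intro w
    constructor
    · intro hw; exact Fin.ext hw
    · intro hw; rw [hw]
  unfold wv
  calc (∏ w : Fin p, if (w : ℕ) = p - 1 then x i ^ p else 1)
      = ∏ w : Fin p, if w = ⟨p - 1, by omega⟩ then x i ^ p else 1 := by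
        apply Finset.prod_congr rfl
        intro w _
        rw [if_congr (hlast w) rfl rfl]
    _ = x i ^ p := by rw [Finset.prod_ite_eq' Finset.univ _ (fun _ => x i ^ p), if_pos (Finset.mem_univ _)]

open Fin.NatCast in
lemma SE_pow_p (hp : p.Prime) [CharP C p] (i : Fin n) :
    (SE x i) ^ p = algebraMap C (Module.End C ((Fin n → Fin p) → C)) (x i ^ p) := by
  apply LinearMap.ext
  intro c
  funext β
  rw [SE_pow_apply, prod_wv x hp, Module.algebraMap_end_apply]
  have : ((p : ℕ) : Fin p) = 0 := by
    haveI : NeZero p := ‹_›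
    exact Fin.natCast_self p
  rw [this, add_zero, Function.update_eq_self]
  rfl

lemma charP_end [CharP C p] (hp : p.Prime) :
    CharP (Module.End C ((Fin n → Fin p) → C)) p := by
  haveI : Nontrivial C := CharP.nontrivial_of_char_ne_one hp.ne_one
  constructor
  intro m
  constructor
  · intro h
    have h1 := congrFun (LinearMap.congr_fun h (fun _ => (1 : C))) (fun _ => 0)
    rw [Module.End.natCast_apply] at h1
    simp only [Pi.smul_apply, LinearMap.zero_apply, Pi.zero_apply, smul_eq_mul,
      nsmul_eq_mul, mul_one] at h1
    exact (CharP.cast_eq_zero_iff C p m).1 h1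
  · intro h
    apply LinearMap.ext
    intro v
    rw [Module.End.natCast_apply]
    funext β
    have : ((m : C)) = 0 := (CharP.cast_eq_zero_iff C p m).2 h
    simp only [Pi.smul_apply, LinearMap.zero_apply, Pi.zero_apply]
    rw [← Nat.cast_smul_eq_nsmul C m, this, zero_smul]

lemma T1_nilpotent [CharP C p] (hp : p.Prime) (i : Fin n) (c : (Fin n → Fin p) → C) :
    (T1 x i)^[p] c = 0 := by
  haveI : Fact p.Prime := ⟨hp⟩
  haveI := charP_end (C := C) (n := n) hp
  set Ea : Module.End C ((Fin n → Fin p) → C) :=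
    algebraMap C (Module.End C ((Fin n → Fin p) → C)) (x i) - SE x i with hEa
  have hfun : T1 x i = ⇑Ea := by
    funext c
    rw [hEa, LinearMap.sub_apply]
    exact T1_eq_end x i c
  have hc : Commute (algebraMap C (Module.End C ((Fin n → Fin p) → C)) (x i)) (SE x i) :=
    Algebra.commute_algebraMap_left _ _
  have hpow : Ea ^ p = 0 := by
    rw [hEa, sub_pow_char_of_commute _ hc, SE_pow_p x hp, map_pow, sub_self]
  rw [hfun, ← Module.End.pow_apply, hpow]
  rfl

end Transforms

end Core

section Main
variable {p n : ℕ} [NeZero p] {A C M : Type u} [CommRing A] [CommRing C] [Algebra A C]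
  [AddCommGroup M] [Module A M] [Module C M] [IsScalarTower A C M]
  {B : Subalgebra A C}

theorem main_vanish (hp : p.Prime) [CharP C p] (x : Fin n → C) (hxp : ∀ i, x i ^ p ∈ B)
    (bas : Module.Basis (Fin n → Fin p) B C) (hbas : ∀ α, bas α = mon x α) :
    ∀ (gs : List C) (c : (Fin n → Fin p) → C) (e : B →ₗ[A] M) (j : ℕ) (ν : Fin n → ℕ),
      (∀ g ∈ gs, g ∈ (B : Set C) ∪ Set.range x) →
      (∀ i, (T1 x i)^[ν i] c = 0) →
      (∀ bs : List B, bs.length = j → bs.foldr (opBracket A B M) e = 0) →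
      p * j + ∑ i, ν i < gs.length + p + n →
      gs.foldr (opBracket A C M) (Tm bas c e) = 0 := by
  intro gs
  induction gs with
  | nil =>
      intro c e j ν _ hc hOrd hlen
      simp only [List.length_nil, Nat.zero_add] at hlen
      rcases Nat.eq_zero_or_pos j with hj | hj
      · have he : e = 0 := by
          have := hOrd [] (by simp [hj])
          simpa using this
        rw [he, Tm_zero_e]
        rfl
      · have hνz : ∃ i, ν i = 0 := by
          by_contra hco
          push_neg at hco
          have hsum : n ≤ ∑ i, ν i := by
            calc n = ∑ _i : Fin n, 1 := by simp
            _ ≤ ∑ i, ν i := Finset.sum_le_sum (fun i _ => Nat.one_le_iff_ne_zero.mpr (hco i))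
          have hpj : p ≤ p * j := Nat.le_mul_of_pos_right p hj
          omega
        obtain ⟨i, hi⟩ := hνz
        have hc0 : c = 0 := by
          have := hc i
          rwa [hi, Function.iterate_zero_apply] at this
        rw [hc0, Tm_zero_c]
        rfl
  | cons g gs ih =>
      intro c e j ν hmem hc hOrd hlen
      simp only [List.length_cons] at hlen
      -- degenerate cases
      rcases Nat.eq_zero_or_pos j with hj | hj
      · have he : e = 0 := by
          have := hOrd [] (by simp [hj])
          simpa using this
        rw [he, Tm_zero_e, foldr_opBracket_zero]
      by_cases hνz : ∃ i, ν i = 0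
      · obtain ⟨i, hi⟩ := hνz
        have hc0 : c = 0 := by
          have := hc i
          rwa [hi, Function.iterate_zero_apply] at this
        rw [hc0, Tm_zero_c, foldr_opBracket_zero]
      push_neg at hνz
      have hν : ∀ i, 1 ≤ ν i := fun i => Nat.one_le_iff_ne_zero.mpr (hνz i)
      obtain ⟨j', rfl⟩ : ∃ j', j = j' + 1 := ⟨j - 1, by omega⟩
      have hmul : p * (j' + 1) = p * j' + p := by ring
      rw [List.foldr_cons, ← foldr_opBracket_swap]
      have hgsmem : ∀ g' ∈ gs, g' ∈ (B : Set C) ∪ Set.range x :=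
        fun g' hg' => hmem g' (List.mem_cons_of_mem g hg')
      rcases hmem g (List.mem_cons_self (a := g) (l := gs)) with hb | hxi
      · -- bracket with an element of B
        lift g to B using hb
        rw [adB bas g c e]
        apply ih c _ j' ν hgsmem hc
        · intro bs hbs
          rw [show bs.foldr (opBracket A B M) (opBracket A B M g e)
              = (bs ++ [g]).foldr (opBracket A B M) e by rw [List.foldr_append]; rfl]
          exact hOrd _ (by simp [hbs])
        · have hppos := hp.pos
          omega
      · -- bracket with a p-basis element
        obtain ⟨i, rfl⟩ := hxi
        rw [adX x hxp bas hp hbas i c e, foldr_opBracket_add]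
        have hsum1 : ν i + ∑ l ∈ Finset.univ.erase i, ν l = ∑ l, ν l :=
          Finset.add_sum_erase Finset.univ ν (Finset.mem_univ i)
        have term1 : gs.foldr (opBracket A C M) (Tm bas (T1 x i c) e) = 0 := by
          apply ih (T1 x i c) e (j' + 1) (Function.update ν i (ν i - 1)) hgsmem
          · intro i'
            rcases eq_or_ne i' i with rfl | hii
            · have h2 : (ν i' - 1) + 1 = ν i' := Nat.sub_add_cancel (hν i')
              rw [Function.update_self, ← Function.iterate_succ_apply, Nat.succ_eq_add_one, h2]
              exact hc i'
            · rw [Function.update_of_ne hii,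
                comm_iterate (fun c' => T1_comm x hii c') (ν i') c, hc i', T1_zero]
          · exact hOrd
          · have hsum2 : (Function.update ν i (ν i - 1)) i
                + ∑ l ∈ Finset.univ.erase i, (Function.update ν i (ν i - 1)) l
                = ∑ l, (Function.update ν i (ν i - 1)) l :=
              Finset.add_sum_erase Finset.univ _ (Finset.mem_univ i)
            have hsame : ∑ l ∈ Finset.univ.erase i, (Function.update ν i (ν i - 1)) l
                = ∑ l ∈ Finset.univ.erase i, ν l :=
              Finset.sum_congr rfl (fun l hl =>
                by rw [Function.update_of_ne (Finset.ne_of_mem_erase hl)])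
            rw [Function.update_self] at hsum2
            have h1 := hν i
            omega
        have term2 : gs.foldr (opBracket A C M)
            (Tm bas (T2 i c) (opBracket A B M (⟨x i ^ p, hxp i⟩ : B) e)) = 0 := by
          apply ih (T2 i c) _ j' (Function.update ν i p) hgsmem
          · intro i'
            rcases eq_or_ne i' i with rfl | hii
            · rw [Function.update_self]
              exact T1_nilpotent x hp i' (T2 i' c)
            · rw [Function.update_of_ne hii,
                comm_iterate (fun c' => T1_T2_comm x hii c') (ν i') c, hc i', T2_zero]
          · intro bs hbs
            rw [show bs.foldr (opBracket A B M) (opBracket A B M ⟨x i ^ p, hxp i⟩ e)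
                = (bs ++ [(⟨x i ^ p, hxp i⟩ : B)]).foldr (opBracket A B M) e by
                rw [List.foldr_append]; rfl]
            exact hOrd _ (by simp [hbs])
          · have hsum2 : (Function.update ν i p) i
                + ∑ l ∈ Finset.univ.erase i, (Function.update ν i p) l
                = ∑ l, (Function.update ν i p) l :=
              Finset.add_sum_erase Finset.univ _ (Finset.mem_univ i)
            have hsame : ∑ l ∈ Finset.univ.erase i, (Function.update ν i p) l
                = ∑ l ∈ Finset.univ.erase i, ν l :=
              Finset.sum_congr rfl (fun l hl =>
                by rw [Function.update_of_ne (Finset.ne_of_mem_erase hl)])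
            rw [Function.update_self] at hsum2
            have h1 := hν i
            omega
        rw [term1, term2, add_zero]
end Main

/-- Proposition 4.12, extension of differential operators: if `C` has a
`p`-basis over `C^{[1]}`, every `A`-linear map `∂ : C^{[1]} → M` extends canonically to
`D : C → M`, giving a `C`-linear section `ext` of restriction which maps differential
operators of order `≤ k` to differential operators of order `≤ pk`. -/
theorem statement8 (p : ℕ) (hp : p.Prime) (A C : Type u)
    [CommRing A] [CommRing C] [CharP A p] [CharP C p] [Algebra A C]
    (hinj : Function.Injective (algebraMap A C)) (hexp : HasFinExp p A C)
    (n : ℕ) (x : Fin n → C) (hx : IsPBasis p (subalgPow p A C 1) C x)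
    (M : Type u) [AddCommGroup M] [Module A M] [Module C M] [IsScalarTower A C M] :
    ∃ ext : ((subalgPow p A C 1) →ₗ[A] M) →ₗ[C] (C →ₗ[A] M),
      (∀ (d : (subalgPow p A C 1) →ₗ[A] M) (lam : subalgPow p A C 1) (α : Fin n → Fin p),
        ext d ((lam : C) * ∏ i, x i ^ (α i : ℕ)) = (∏ i, x i ^ (α i : ℕ)) • d lam) ∧
      (∀ (d : (subalgPow p A C 1) →ₗ[A] M) (lam : subalgPow p A C 1),
        ext d (lam : C) = d lam) ∧
      (∀ (k : ℕ) (d : (subalgPow p A C 1) →ₗ[A] M),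
        IsDiffOpLE A (subalgPow p A C 1) M k d →
          IsDiffOpLE A C M (p * k) (ext d)) := by
  classical
  haveI : NeZero p := ⟨hp.ne_zero⟩
  set B := subalgPow p A C 1 with hB
  have hxpB : ∀ i, x i ^ p ∈ B := by
    intro i
    have h1 : x i ^ p = x i ^ p ^ 1 := by rw [pow_one]
    rw [hB, h1]
    exact Algebra.subset_adjoin ⟨x i, rfl⟩
  obtain ⟨hli, hsp⟩ := hx
  let bas : Module.Basis (Fin n → Fin p) B C := Module.Basis.mk hli (by rw [hsp])
  have hbas : ∀ α, bas α = mon x α := fun α => Module.Basis.mk_apply _ _ _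
  have key : ∀ (d : B →ₗ[A] M) (lam : B) (α : Fin n → Fin p),
      Tm bas (mon x) d ((lam : C) * ∏ i, x i ^ (α i : ℕ)) =
        (∏ i, x i ^ (α i : ℕ)) • d lam := by
    intro d lam α
    have h1 : (lam : C) * ∏ i, x i ^ (α i : ℕ) = lam • bas α := by
      rw [hbas]
      rfl
    rw [h1, Tm_apply]
    rw [Finset.sum_eq_single α]
    · have h2 : bas.repr (lam • bas α) α = lam := by
        rw [map_smul, Module.Basis.repr_self, Finsupp.smul_apply, Finsupp.single_apply,
          if_pos rfl, smul_eq_mul, mul_one]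
      rw [h2]
      rfl
    · intro β _ hβ
      have h2 : bas.repr (lam • bas α) β = 0 := by
        rw [map_smul, Module.Basis.repr_self, Finsupp.smul_apply, Finsupp.single_apply,
          if_neg (fun hh => hβ hh.symm), smul_zero]
      rw [h2, map_zero, smul_zero]
    · intro hα
      exact absurd (Finset.mem_univ α) hα
  refine ⟨{ toFun := fun e => Tm bas (mon x) e
            map_add' := fun e e' => Tm_add_e bas (mon x) e e'
            map_smul' := fun y e => Tm_smul_e bas (mon x) y e }, ?_, ?_, ?_⟩
  · exact key
  · intro d lam
    have h0 : ((fun _ => (0 : Fin p) : Fin n → Fin p)) = (fun _ => 0) := rfl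
    have h1 : (lam : C) = (lam : C) * ∏ i, x i ^ (((fun _ => (0 : Fin p)) i : Fin p) : ℕ) := by
      simp
    calc Tm bas (mon x) d (lam : C)
        = Tm bas (mon x) d ((lam : C) * ∏ i, x i ^ (((fun _ => (0 : Fin p)) i : Fin p) : ℕ)) := by
          rw [← h1]
      _ = (∏ i, x i ^ (((fun _ => (0 : Fin p)) i : Fin p) : ℕ)) • d lam := key d lam (fun _ => 0)
      _ = d lam := by simp
  · intro k d hd
    have hgen : Algebra.adjoin A ((B : Set C) ∪ Set.range x) = ⊤ := by
      rw [eq_top_iff]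
      intro u hu'
      clear hu'
      have hu : u ∈ Submodule.span B
          (Set.range fun α : Fin n → Fin p => ∏ i, x i ^ (α i : ℕ)) := by
        rw [hsp]
        exact Submodule.mem_top
      induction hu using Submodule.span_induction with
      | mem v hv =>
          obtain ⟨α, rfl⟩ := hv
          apply Subalgebra.prod_mem
          intro i _
          apply Subalgebra.pow_mem
          apply Algebra.subset_adjoin
          exact Or.inr ⟨i, rfl⟩
      | zero => exact Subalgebra.zero_mem _
      | add v w _ _ hv hw => exact Subalgebra.add_mem _ hv hw
      | smul b v _ hv =>
          have hbv : b • v = (b : C) * v := rfl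
          rw [hbv]
          exact Subalgebra.mul_mem _ (Algebra.subset_adjoin (Or.inl b.2)) hv
    apply GenVanish.isDiffOpLE hgen (GS := (B : Set C) ∪ Set.range x)
      (D := Tm bas (mon x) d) (N := p * k)
    intro gs hmem hlen
    apply main_vanish hp x hxpB bas hbas gs (mon x) d (k + 1) (fun _ => 1) hmem
    · intro i
      rw [Function.iterate_one]
      funext β
      have := xmul_mon x hp i β
      simp only [T1, Pi.zero_apply]
      rw [this, sub_self]
    · exact hd
    · have hs : ∑ _i : Fin n, 1 = n := by simp
      have hmul : p * (k + 1) = p * k + p := by ring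
      have hppos := hp.pos
      omega

end PIPaper
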